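/- Let k ≥ 3 be an integer, let G be a finite simple graph with m edges, and let (V_1, …, V_k) be a k-partition of G such that every vertex x ∈ V_1 satisfies |N(x) ∖ V_1| ≥ (k−1)·|N(x) ∩ V_1|. Write e(V_1) = m/k² + β_1. Let v ∈ V_1 with d := |N(v) ∩ V_1| ≥ 1, set Y_1 := V_1 ∖ {v}, let x := e(Y_1, V(G) ∖ Y_1) and m' := e(V(G) ∖ Y_1). Then 2(k−1)·(m/k² + β_1) − (k−2)·d ≤ x ≤ (k²−1)/k²·m − β_1 + d, and m' ≤ (k−1)²/k²·m − (2k−1)·β_1 + (k−1)·d. -/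

import Mathlib

open Finset

noncomputable def hfun (x : ℝ) : ℝ := Real.sqrt (2 * x + 1 / 4) - 1 / 2

variable {V : Type*} [Fintype V] [DecidableEq V]

/-- Number of edges of `G` with both endpoints in `S`. -/
def eIn (G : SimpleGraph V) [DecidableRel G.Adj] (S : Finset V) : ℕ :=
  (Finset.univ.filter (fun p : V × V => G.Adj p.1 p.2 ∧ p.1 ∈ S ∧ p.2 ∈ S)).card / 2

/-- Number of edges of `G` with one endpoint in `S` and the other in `T` (for disjoint `S`, `T`). -/
def eCross (G : SimpleGraph V) [DecidableRel G.Adj] (S T : Finset V) : ℕ :=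
  (Finset.univ.filter (fun p : V × V => G.Adj p.1 p.2 ∧ p.1 ∈ S ∧ p.2 ∈ T)).card

/-- `P` is a partition of the vertex set into `k` pairwise disjoint (possibly empty) parts. -/
def IsKPartition {k : ℕ} (P : Fin k → Finset V) : Prop :=
  (∀ i j : Fin k, i ≠ j → Disjoint (P i) (P j)) ∧ ∀ v : V, ∃ i, v ∈ P i

/-- The number of crossing edges of a `k`-partition. -/
def crossTotal (G : SimpleGraph V) [DecidableRel G.Adj] {k : ℕ} (P : Fin k → Finset V) : ℕ :=
  ∑ i : Fin k, ∑ j : Fin k, if i < j then eCross G (P i) (P j) else 0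

/-- `f_k(G)`: the maximum number of crossing edges over all `k`-partitions of `G`. -/
noncomputable def maxCut (G : SimpleGraph V) [DecidableRel G.Adj] (k : ℕ) : ℕ :=
  sSup {n : ℕ | ∃ P : Fin k → Finset V, IsKPartition P ∧ crossTotal G P = n}

lemma eCross_eq_sum (G : SimpleGraph V) [DecidableRel G.Adj] (S T : Finset V) :
    eCross G S T = ∑ u ∈ S, (G.neighborFinset u ∩ T).card := by
  rw [eCross, Finset.card_filter, Fintype.sum_prod_type]
  rw [← Finset.sum_filter_add_sum_filter_not Finset.univ (· ∈ S)]
  have h1 : ∀ u ∈ Finset.univ.filter (· ∈ S),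
      (∑ w : V, if G.Adj u w ∧ u ∈ S ∧ w ∈ T then 1 else 0) = (G.neighborFinset u ∩ T).card := by
    intro u hu
    simp only [mem_filter, mem_univ, true_and] at hu
    have : G.neighborFinset u ∩ T = Finset.univ.filter (fun w => G.Adj u w ∧ u ∈ S ∧ w ∈ T) := by
      ext w; simp [hu, SimpleGraph.mem_neighborFinset]
    rw [this, Finset.card_filter]
  rw [Finset.sum_congr rfl h1]
  have h2 : ∀ u ∈ Finset.univ.filter (¬ · ∈ S),
      (∑ w : V, if G.Adj u w ∧ u ∈ S ∧ w ∈ T then 1 else 0) = 0 := by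
    intro u hu
    simp only [mem_filter, mem_univ, true_and] at hu
    simp [hu]
  rw [Finset.sum_congr rfl h2, Finset.sum_const_zero, add_zero]
  congr 1
  ext u; simp

lemma eCross_comm (G : SimpleGraph V) [DecidableRel G.Adj] (S T : Finset V) :
    eCross G S T = eCross G T S := by
  rw [eCross, eCross]
  apply Finset.card_bij' (fun p _ => p.swap) (fun p _ => p.swap)
  · intro p _; simp
  · intro p _; simp
  · intro p hp; simp only [mem_filter, mem_univ, true_and] at hp ⊢
    exact ⟨hp.1.symm, hp.2.2, hp.2.1⟩
  · intro p hp; simp only [mem_filter, mem_univ, true_and] at hp ⊢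
    exact ⟨hp.1.symm, hp.2.2, hp.2.1⟩

lemma two_dvd_eCross_self (G : SimpleGraph V) [DecidableRel G.Adj] (S : Finset V) :
    2 ∣ eCross G S S := by
  letI : LinearOrder V :=
    LinearOrder.lift' (fun v => (Fintype.equivFin V v)) (Fintype.equivFin V).injective
  rw [eCross]
  set P := Finset.univ.filter (fun p : V × V => G.Adj p.1 p.2 ∧ p.1 ∈ S ∧ p.2 ∈ S) with hP
  have hsplit : (P.filter (fun p => p.1 < p.2)).card + (P.filter (fun p => ¬ p.1 < p.2)).card
      = P.card := Finset.card_filter_add_card_filter_not _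
  have hbij : (P.filter (fun p => ¬ p.1 < p.2)).card = (P.filter (fun p => p.1 < p.2)).card := by
    apply Finset.card_bij' (fun p _ => p.swap) (fun p _ => p.swap)
    · intro p _; simp
    · intro p _; simp
    · intro p hp
      simp only [hP, mem_filter, mem_univ, true_and, not_lt] at hp ⊢
      refine ⟨⟨hp.1.1.symm, hp.1.2.2, hp.1.2.1⟩, ?_⟩
      exact lt_of_le_of_ne hp.2 (fun h => hp.1.1.ne' h)
    · intro p hp
      simp only [hP, mem_filter, mem_univ, true_and, not_lt] at hp ⊢
      exact ⟨⟨hp.1.1.symm, hp.1.2.2, hp.1.2.1⟩, le_of_lt hp.2⟩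
  omega

lemma two_mul_eIn (G : SimpleGraph V) [DecidableRel G.Adj] (S : Finset V) :
    2 * eIn G S = ∑ u ∈ S, (G.neighborFinset u ∩ S).card := by
  have h : eIn G S = eCross G S S / 2 := rfl
  rw [h, Nat.mul_div_cancel' (two_dvd_eCross_self G S), eCross_eq_sum]

/-- Edge-distribution bounds after removing a vertex from the first part of a partition
satisfying property Q. -/
theorem stmt_15 {V : Type*} [Fintype V] [DecidableEq V]
    (G : SimpleGraph V) [DecidableRel G.Adj] (k : ℕ) (hk : 3 ≤ k)
    (m : ℕ) (hm : m = G.edgeFinset.card)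
    (P : Fin k → Finset V) (hP : IsKPartition P)
    (V1 : Finset V) (hV1 : V1 = P ⟨0, by omega⟩)
    (hQ : ∀ x ∈ V1,
      (k - 1) * (G.neighborFinset x ∩ V1).card ≤ (G.neighborFinset x \ V1).card)
    (β1 : ℝ) (hβ : (eIn G V1 : ℝ) = (m : ℝ) / k ^ 2 + β1)
    (v : V) (hv : v ∈ V1) (d : ℕ) (hd : d = (G.neighborFinset v ∩ V1).card) (hd1 : 1 ≤ d)
    (Y1 : Finset V) (hY1 : Y1 = V1 \ {v})
    (x : ℕ) (hx : x = eCross G Y1 (Finset.univ \ Y1))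
    (m' : ℕ) (hm' : m' = eIn G (Finset.univ \ Y1)) :
    (2 * ((k : ℝ) - 1) * ((m : ℝ) / k ^ 2 + β1) - ((k : ℝ) - 2) * d ≤ (x : ℝ) ∧
      (x : ℝ) ≤ ((k : ℝ) ^ 2 - 1) / k ^ 2 * m - β1 + d) ∧
    (m' : ℝ) ≤ ((k : ℝ) - 1) ^ 2 / k ^ 2 * m - (2 * (k : ℝ) - 1) * β1 + ((k : ℝ) - 1) * d := by
  have hY1v : v ∉ Y1 := by simp [hY1]
  have hY1sub : Y1 ⊆ V1 := by rw [hY1]; exact sdiff_subset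
  have hins : V1 = insert v Y1 := by
    rw [hY1, ← Finset.erase_eq, Finset.insert_erase hv]
  -- splitting cardinalities at v
  have hsingle : ∀ A : Finset V, (A ∩ {v}).card = if v ∈ A then 1 else 0 := by
    intro A
    split_ifs with h
    · rw [Finset.inter_singleton_of_mem h, Finset.card_singleton]
    · rw [Finset.inter_singleton_of_notMem h, Finset.card_empty]
  have hcardV1 : ∀ A : Finset V, (A ∩ V1).card = (A ∩ Y1).card + (A ∩ {v}).card := by
    intro A
    rw [← Finset.card_union_of_disjoint]
    · congr 1
      ext w
      simp only [mem_union, mem_inter, mem_singleton, hY1, mem_sdiff]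
      constructor
      · rintro ⟨hwA, hwV⟩
        by_cases hwv : w = v
        · exact Or.inr ⟨hwA, hwv⟩
        · exact Or.inl ⟨hwA, hwV, hwv⟩
      · rintro (⟨hwA, hwV, _⟩ | ⟨hwA, rfl⟩)
        exacts [⟨hwA, hwV⟩, ⟨hwA, hv⟩]
    · rw [Finset.disjoint_left]
      intro w hw1 hw2
      simp only [mem_inter, mem_singleton] at hw1 hw2
      exact hY1v (hw2.2 ▸ hw1.2)
  have hcardC : ∀ A : Finset V, (A \ Y1).card = (A \ V1).card + (A ∩ {v}).card := by
    intro A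
    rw [← Finset.card_union_of_disjoint]
    · congr 1
      ext w
      simp only [mem_union, mem_sdiff, mem_inter, mem_singleton, hY1, mem_sdiff, not_and, not_not]
      constructor
      · rintro ⟨hwA, hwY⟩
        by_cases hwV : w ∈ V1
        · exact Or.inr ⟨hwA, hwY hwV⟩
        · exact Or.inl ⟨hwA, hwV⟩
      · rintro (⟨hwA, hwV⟩ | ⟨hwA, rfl⟩)
        · exact ⟨hwA, fun h => absurd h hwV⟩
        · exact ⟨hwA, fun _ => rfl⟩
    · rw [Finset.disjoint_left]
      intro w hw1 hw2
      simp only [mem_sdiff, mem_inter, mem_singleton] at hw1 hw2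
      exact hw1.2 (hw2.2 ▸ hv)
  have hvnotself : v ∉ G.neighborFinset v := by
    simp [SimpleGraph.mem_neighborFinset]
  have hdY : (G.neighborFinset v ∩ Y1).card = d := by
    have h := hcardV1 (G.neighborFinset v)
    rw [hsingle, if_neg hvnotself] at h
    omega
  have hsumv : ∑ u ∈ Y1, (G.neighborFinset u ∩ {v}).card = d := by
    have h1 : ∀ u ∈ Y1, (G.neighborFinset u ∩ {v}).card
        = if u ∈ G.neighborFinset v then 1 else 0 := by
      intro u _
      rw [hsingle]
      congr 1
      simp [SimpleGraph.mem_neighborFinset, G.adj_comm]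
    rw [Finset.sum_congr rfl h1, Finset.sum_ite_mem, Finset.sum_const, smul_eq_mul, mul_one,
      Finset.inter_comm, hdY]
  -- sums
  have hcompl : ∀ A : Finset V, A ∩ (Finset.univ \ Y1) = A \ Y1 := by
    intro A; ext w; simp
  have n1 : 2 * eIn G V1 = (∑ u ∈ Y1, (G.neighborFinset u ∩ V1).card) + d := by
    rw [two_mul_eIn, hins, Finset.sum_insert hY1v, ← hins, ← hd]
    exact Nat.add_comm _ _
  have n2 : (∑ u ∈ Y1, (G.neighborFinset u ∩ V1).card) = 2 * eIn G Y1 + d := by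
    have h1 : ∀ u ∈ Y1, (G.neighborFinset u ∩ V1).card
        = (G.neighborFinset u ∩ Y1).card + (G.neighborFinset u ∩ {v}).card :=
      fun u _ => hcardV1 _
    rw [Finset.sum_congr rfl h1, Finset.sum_add_distrib, two_mul_eIn, hsumv]
  have nx : x = (∑ u ∈ Y1, (G.neighborFinset u \ V1).card) + d := by
    rw [hx, eCross_eq_sum]
    have h1 : ∀ u ∈ Y1, (G.neighborFinset u ∩ (Finset.univ \ Y1)).card
        = (G.neighborFinset u \ V1).card + (G.neighborFinset u ∩ {v}).card := by
      intro u _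
      rw [hcompl, hcardC]
    rw [Finset.sum_congr rfl h1, Finset.sum_add_distrib, hsumv]
  have nQ : (k - 1) * (∑ u ∈ Y1, (G.neighborFinset u ∩ V1).card)
      ≤ ∑ u ∈ Y1, (G.neighborFinset u \ V1).card := by
    rw [Finset.mul_sum]
    exact Finset.sum_le_sum fun u hu => hQ u (hY1sub hu)
  have hxl : (k - 1) * (∑ u ∈ Y1, (G.neighborFinset u ∩ V1).card) + d ≤ x := by omega
  -- edge partition
  have ncard : ∀ u : V, (G.neighborFinset u).card
      = (G.neighborFinset u ∩ Y1).card + (G.neighborFinset u ∩ (Finset.univ \ Y1)).card := by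
    intro u
    rw [hcompl]
    exact (Finset.card_inter_add_card_sdiff _ _).symm
  have e1 : ∑ u ∈ Y1, (G.neighborFinset u).card = 2 * eIn G Y1 + x := by
    rw [Finset.sum_congr rfl (fun u _ => ncard u), Finset.sum_add_distrib, two_mul_eIn,
      hx, eCross_eq_sum]
  have e2 : ∑ u ∈ Finset.univ \ Y1, (G.neighborFinset u).card = x + 2 * m' := by
    rw [Finset.sum_congr rfl (fun u _ => ncard u), Finset.sum_add_distrib, hm', two_mul_eIn, hx]
    congr 1
    rw [← eCross_eq_sum G (Finset.univ \ Y1) Y1, eCross_comm, eCross_eq_sum]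
  have h2m : 2 * m = (x + 2 * m') + (2 * eIn G Y1 + x) := by
    rw [hm, ← SimpleGraph.sum_degrees_eq_twice_card_edges, ← e1, ← e2]
    rw [← Finset.sum_sdiff (Finset.subset_univ Y1)]
    rfl
  have hmeq : m = eIn G Y1 + x + m' := by omega
  have hV1split : eIn G V1 = eIn G Y1 + d := by omega
  -- real part
  have hK3 : (3 : ℝ) ≤ (k : ℝ) := by exact_mod_cast hk
  have hKne : (k : ℝ) ^ 2 ≠ 0 := by positivity
  have h1k : 1 ≤ k := by omega
  set S1 : ℕ := ∑ u ∈ Y1, (G.neighborFinset u ∩ V1).card with hS1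
  have cx : ((k : ℝ) - 1) * (S1 : ℝ) + (d : ℝ) ≤ (x : ℝ) := by
    have := hxl
    have h := (Nat.cast_le (α := ℝ)).mpr this
    push_cast [Nat.cast_sub h1k] at h
    linarith
  have e1r : 2 * (eIn G V1 : ℝ) = (S1 : ℝ) + (d : ℝ) := by exact_mod_cast n1
  have cS1 : (S1 : ℝ) = 2 * (eIn G Y1 : ℝ) + d := by exact_mod_cast n2
  have cmr : (m : ℝ) = (eIn G Y1 : ℝ) + x + m' := by exact_mod_cast hmeq
  have cV1 : (eIn G V1 : ℝ) = (eIn G Y1 : ℝ) + d := by exact_mod_cast hV1split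
  have hm'0 : (0 : ℝ) ≤ (m' : ℝ) := Nat.cast_nonneg _
  have hid3 : ((k : ℝ) - 1) * (S1 : ℝ)
      = 2 * ((k : ℝ) - 1) * (eIn G V1 : ℝ) - ((k : ℝ) - 1) * d := by
    linear_combination (1 - (k : ℝ)) * e1r
  have key1 : ((k : ℝ) ^ 2 - 1) / k ^ 2 * m = m - (m : ℝ) / k ^ 2 := by
    field_simp
  have key2 : ((k : ℝ) - 1) ^ 2 / k ^ 2 * m = m - (2 * (k : ℝ) - 1) * ((m : ℝ) / k ^ 2) := by
    field_simp
    ring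
  have hid4 : (2 * (k : ℝ) - 1) * ((m : ℝ) / k ^ 2)
      = (2 * (k : ℝ) - 1) * (eIn G V1 : ℝ) - (2 * (k : ℝ) - 1) * β1 := by
    linear_combination (1 - 2 * (k : ℝ)) * hβ
  refine ⟨⟨?_, ?_⟩, ?_⟩
  · rw [← hβ]; linarith [cx, hid3]
  · rw [key1]; linarith [hβ, cmr, cV1, hm'0]
  · rw [key2]; linarith [cx, hid3, hid4, cmr, cV1, hm'0, cS1, e1r]
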